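/- arXiv:1307.4032 — 3 statements merged into one kernel-verified Lean document; each statement's English description precedes it below -/
import Mathlib

section
/- Let k be a field of characteristic zero and A a commutative k-algebra which is an integral domain. If I is an ideal of A which is stable under every k-linear derivation of A, and I is neither the zero ideal nor the unit ideal, then A admits a nonzero prime ideal containing I that is stable under all derivations; in particular, for A = k[x,y] a nonzero ideal stable under ∂/∂x and ∂/∂y must be the unit ideal. -/
open MvPolynomial

section Aux

lemma cancel_natCast (k : Type*) [Field k] [CharZero k] {A : Type*} [CommRing A] [Algebra k A] {P : Ideal A} {n : ℕ} (hn : n ≠ 0) {y : A} (h : (n : A) * y ∈ P) :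
    y ∈ P := by
  have hk : (n : k) ≠ 0 := Nat.cast_ne_zero.mpr hn
  have h1 : algebraMap k A ((n : k)⁻¹) * ((n : A) * y) = y := by
    rw [← mul_assoc]
    have : algebraMap k A ((n : k)⁻¹) * (n : A) = 1 := by
      rw [← map_natCast (algebraMap k A) n, ← map_mul, inv_mul_cancel₀ hk, map_one]
    rw [this, one_mul]
  rw [← h1]
  exact Ideal.mul_mem_left _ _ h

lemma diff_step {k : Type*} [Field k] [CharZero k] {A : Type*} [CommRing A] [Algebra k A] {P : Ideal A} (hP : ∀ D : Derivation k A A, ∀ x ∈ P, D x ∈ P)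
    (D : Derivation k A A) {x : A} (a b : ℕ)
    (h : x ^ (a + 1) * (D x) ^ (b + 1) ∈ P) : x ^ a * (D x) ^ (b + 3) ∈ P := by
  set u := D x with hu
  have hDt : D (x ^ (a + 1) * u ^ (b + 1)) ∈ P := hP D _ h
  have key : ((a : A) + 1) * (x ^ a * u ^ (b + 3)) =
      u * D (x ^ (a + 1) * u ^ (b + 1))
        - ((b : A) + 1) * (D u * (x ^ (a + 1) * u ^ (b + 1))) := by
    rw [Derivation.leibniz, Derivation.leibniz_pow, Derivation.leibniz_pow]
    simp only [smul_eq_mul, nsmul_eq_mul, Nat.add_sub_cancel, ← hu]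
    push_cast
    ring
  have hmem : ((a + 1 : ℕ) : A) * (x ^ a * u ^ (b + 3)) ∈ P := by
    push_cast
    rw [key]
    exact Ideal.sub_mem _ (Ideal.mul_mem_left _ _ hDt)
      (Ideal.mul_mem_left _ _ (Ideal.mul_mem_left _ _ h))
  exact cancel_natCast k (Nat.succ_ne_zero a) hmem

lemma diff_descend {k : Type*} [Field k] [CharZero k] {A : Type*} [CommRing A] [Algebra k A] {P : Ideal A} (hP : ∀ D : Derivation k A A, ∀ x ∈ P, D x ∈ P)
    (D : Derivation k A A) {x : A} :
    ∀ a b : ℕ, x ^ a * (D x) ^ (b + 1) ∈ P → D x ∈ P.radical := by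
  intro a
  induction a with
  | zero =>
    intro b h
    rw [pow_zero, one_mul] at h
    exact ⟨b + 1, h⟩
  | succ a ih =>
    intro b h
    have := diff_step hP D a b h
    exact ih (b + 2) (by convert this using 2)

lemma radical_differential {k : Type*} [Field k] [CharZero k] {A : Type*} [CommRing A] [Algebra k A] {P : Ideal A} (hP : ∀ D : Derivation k A A, ∀ x ∈ P, D x ∈ P) :
    ∀ D : Derivation k A A, ∀ x ∈ P.radical, D x ∈ P.radical := by
  intro D x hx
  obtain ⟨n, hn⟩ := hx
  rcases n with _ | a
  · have hT : P = ⊤ := (Ideal.eq_top_iff_one P).mpr (by simpa using hn)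
    subst hT
    simp [Ideal.radical_top]
  · have h1 : x ^ a * D x ∈ P := by
      have h2 := hP D _ hn
      rw [Derivation.leibniz_pow] at h2
      apply cancel_natCast k (Nat.succ_ne_zero a)
      simpa [nsmul_eq_mul, smul_eq_mul, mul_assoc] using h2
    rcases a with _ | a'
    · rw [pow_zero, one_mul] at h1
      exact Ideal.le_radical h1
    · exact diff_descend hP D (a' + 1) 0 (by simpa using h1)

end Aux

section Part2

variable {k : Type*} [Field k] [CharZero k]

lemma coeff_pderiv {σ : Type*} [DecidableEq σ] (i : σ) (m : σ →₀ ℕ)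
    (p : MvPolynomial σ k) :
    coeff m (pderiv i p) = ((m i + 1 : ℕ) : k) * coeff (m + Finsupp.single i 1) p := by
  induction p using MvPolynomial.induction_on' with
  | monomial t a =>
    rw [pderiv_monomial, coeff_monomial, coeff_monomial]
    by_cases ht : t = m + Finsupp.single i 1
    · subst ht
      rw [if_pos (add_tsub_cancel_right m (Finsupp.single i 1)), if_pos rfl,
        Finsupp.add_apply, Finsupp.single_eq_same]
      push_cast
      ring
    · rw [if_neg ht, mul_zero]
      by_cases hti : t i = 0
      · rw [hti]
        push_cast
        rw [mul_zero]
        split <;> rfl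
      · have hne : t - Finsupp.single i 1 ≠ m := by
          intro hEq
          apply ht
          ext j
          have hpt : t j - (Finsupp.single i 1) j = m j := by
            rw [← Finsupp.tsub_apply, hEq]
          rw [Finsupp.add_apply]
          by_cases hj : j = i
          · subst hj
            rw [Finsupp.single_eq_same] at hpt ⊢
            omega
          · rw [Finsupp.single_eq_of_ne hj] at hpt ⊢
            omega
        rw [if_neg hne]
  | add p q hp hq =>
    simp [hp, hq, mul_add]

end Part2

/-- Over a field `k` of characteristic zero: (1) if `A` is a commutative `k`-algebra
domain and `I` a proper nonzero ideal stable under every `k`-linear derivation of `A`,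
then there is a nonzero prime ideal containing `I` which is stable under all
derivations; (2) in particular, in `k[x,y]` a nonzero ideal stable under both partial
derivatives must be the unit ideal. -/
theorem stmt_2 (k : Type*) [Field k] [CharZero k]
    (A : Type*) [CommRing A] [IsDomain A] [Algebra k A]
    (I : Ideal A) (hI0 : I ≠ ⊥) (hI1 : I ≠ ⊤)
    (hstab : ∀ (D : Derivation k A A), ∀ x ∈ I, D x ∈ I) :
    (∃ P : Ideal A, P.IsPrime ∧ P ≠ ⊥ ∧ I ≤ P ∧
      ∀ (D : Derivation k A A), ∀ x ∈ P, D x ∈ P) ∧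
    (∀ J : Ideal (MvPolynomial (Fin 2) k), J ≠ ⊥ →
      (∀ x ∈ J, MvPolynomial.pderiv (0 : Fin 2) x ∈ J) →
      (∀ x ∈ J, MvPolynomial.pderiv (1 : Fin 2) x ∈ J) →
      J = ⊤) := by
  constructor
  · -- Part 1
    set S : Set (Ideal A) := {J | I ≤ J ∧ J ≠ ⊤ ∧ ∀ D : Derivation k A A, ∀ x ∈ J, D x ∈ J}
      with hS
    have hIS : I ∈ S := ⟨le_rfl, hI1, hstab⟩
    obtain ⟨P, hIP, hPS, hPmax⟩ := zorn_le_nonempty₀ S (fun c hcS hc y hy => by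
      refine ⟨sSup c, ⟨?_, ?_, ?_⟩, fun z hz => le_sSup hz⟩
      · exact le_trans (hcS hy).1 (le_sSup hy)
      · intro hT
        have h1 : (1 : A) ∈ sSup c := hT ▸ Submodule.mem_top
        obtain ⟨J, hJc, hJ1⟩ :=
          (Submodule.mem_sSup_of_directed ⟨y, hy⟩ hc.directedOn).mp h1
        exact (hcS hJc).2.1 ((Ideal.eq_top_iff_one J).mpr hJ1)
      · intro D x hx
        obtain ⟨J, hJc, hJx⟩ :=
          (Submodule.mem_sSup_of_directed ⟨y, hy⟩ hc.directedOn).mp hx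
        exact le_sSup hJc ((hcS hJc).2.2 D x hJx)) I hIS
    obtain ⟨hIleP, hPne, hPdiff⟩ := hPS
    -- P is radical
    have hradS : P.radical ∈ S :=
      ⟨le_trans hIleP Ideal.le_radical, fun h => hPne (Ideal.radical_eq_top.mp h),
        radical_differential hPdiff⟩
    have hPrad : P.radical = P :=
      le_antisymm (hPmax hradS Ideal.le_radical) Ideal.le_radical
    have hprime : P.IsPrime := by
      refine ⟨hPne, ?_⟩
      intro a b hab
      by_cases ha : a ∈ P
      · exact Or.inl ha
      · right
        set Q := P.colon (Ideal.span {a}) with hQ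
        have hmem : ∀ r : A, r ∈ Q ↔ r * a ∈ P := fun r => Ideal.mem_colon_span_singleton
        have hPQ : P ≤ Q := fun p hp => (hmem p).mpr (Ideal.mul_mem_right _ _ hp)
        have hQS : Q ∈ S := by
          refine ⟨le_trans hIleP hPQ, ?_, ?_⟩
          · intro hT
            exact ha (by simpa using (hmem 1).mp (hT ▸ Submodule.mem_top))
          · intro D x hx
            have hxa : x * a ∈ P := (hmem x).mp hx
            have hD : D (x * a) ∈ P := hPdiff D _ hxa
            rw [Derivation.leibniz, smul_eq_mul, smul_eq_mul] at hD
            have h2 : a * (x * D a + a * D x) ∈ P := Ideal.mul_mem_left _ _ hD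
            have h3 : a * (x * D a) ∈ P := by
              have : (x * a) * D a ∈ P := Ideal.mul_mem_right _ _ hxa
              convert this using 1; ring
            have h4 : a * (a * D x) ∈ P := by
              have := Ideal.sub_mem _ h2 h3
              convert this using 1; ring
            have h5 : (D x * a) ^ 2 ∈ P := by
              have : (D x) * (a * (a * D x)) ∈ P := Ideal.mul_mem_left _ _ h4
              convert this using 1; ring
            have h6 : D x * a ∈ P := hPrad ▸ (⟨2, h5⟩ : D x * a ∈ P.radical)
            exact (hmem (D x)).mpr h6
        have hQP : Q ≤ P := hPmax hQS hPQ
        exact hQP ((hmem b).mpr (by rwa [mul_comm]))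
    have hPbot : P ≠ ⊥ := fun h => hI0 (le_bot_iff.mp (h ▸ hIleP))
    exact ⟨P, hprime, hPbot, hIleP, hPdiff⟩
  · -- Part 2
    intro J hJ0 h0 h1
    classical
    obtain ⟨p₀, hp₀J, hp₀⟩ := Submodule.exists_mem_ne_zero_of_ne_bot hJ0
    have hex : ∃ n : ℕ, ∃ p : MvPolynomial (Fin 2) k,
        p ∈ J ∧ p ≠ 0 ∧ p.totalDegree = n := ⟨_, p₀, hp₀J, hp₀, rfl⟩
    set d := Nat.find hex with hd
    obtain ⟨p, hpJ, hp, hpd⟩ := Nat.find_spec hex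
    replace hpd : p.totalDegree = d := hpd
    rcases Nat.eq_zero_or_pos d with hd0 | hdpos
    · -- p is a nonzero constant
      replace hpd : p.totalDegree = 0 := by omega
      obtain ⟨c, rfl⟩ : ∃ c, p = C c := by
        refine ⟨coeff 0 p, ?_⟩
        ext m
        rw [coeff_C]
        by_cases hm : 0 = m
        · rw [if_pos hm, hm]
        · rw [if_neg hm]
          by_contra hc
          have hms : m ∈ p.support := by rwa [mem_support_iff]
          have hall := (totalDegree_eq_zero_iff (Fin 2) p).mp hpd m hms
          exact hm (by ext j; exact (hall j).symm)
      have hc : c ≠ 0 := fun h => hp (by simp [h])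
      exact Ideal.eq_top_of_isUnit_mem _ hpJ ((isUnit_iff_ne_zero.mpr hc).map C)
    · -- p has positive degree: find a partial derivative of smaller degree
      exfalso
      obtain ⟨s, hs, hsum⟩ := Finset.exists_mem_eq_sup p.support
        (support_nonempty.mpr hp) (fun m : Fin 2 →₀ ℕ => m.sum fun _ e => e)
      have hsd : (s.sum fun _ e => e) = d := by
        rw [← hpd, totalDegree, hsum]
      have hsne : ∃ i : Fin 2, s i ≠ 0 := by
        by_contra hall
        push_neg at hall
        have hs0 : s = 0 := Finsupp.ext fun j => hall j
        rw [hs0] at hsd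
        simp [Finsupp.sum_zero_index] at hsd
        omega
      obtain ⟨i, hi⟩ := hsne
      have hqJ : pderiv i p ∈ J := by
        fin_cases i
        · exact h0 p hpJ
        · exact h1 p hpJ
      set q := pderiv i p with hq
      have hcq : ∀ m : Fin 2 →₀ ℕ, coeff m q =
          ((m i + 1 : ℕ) : k) * coeff (m + Finsupp.single i 1) p := fun m =>
        coeff_pderiv i m p
      have hsub : (s - Finsupp.single i 1) + Finsupp.single i 1 = s := by
        ext j
        by_cases hj : j = i
        · subst hj; simp; omega
        · simp [Finsupp.single_eq_of_ne hj]
      have hqne : q ≠ 0 := by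
        intro h
        have := hcq (s - Finsupp.single i 1)
        rw [h, coeff_zero, hsub] at this
        have hcs : coeff s p ≠ 0 := mem_support_iff.mp hs
        have hfac : ((((s - Finsupp.single i 1 : Fin 2 →₀ ℕ)) i + 1 : ℕ) : k) ≠ 0 :=
          Nat.cast_ne_zero.mpr (Nat.succ_ne_zero _)
        exact hcs (by
          rcases mul_eq_zero.mp this.symm with h' | h'
          · exact absurd h' hfac
          · exact h')
      have hqdeg : q.totalDegree < d := by
        rw [totalDegree]
        refine Finset.sup_lt_iff (by simpa using hdpos) |>.mpr ?_
        intro m hm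
        have hcm : coeff m q ≠ 0 := mem_support_iff.mp hm
        rw [hcq m] at hcm
        have hcmp : coeff (m + Finsupp.single i 1) p ≠ 0 := fun h => hcm (by rw [h, mul_zero])
        have hmem : m + Finsupp.single i 1 ∈ p.support := mem_support_iff.mpr hcmp
        have hle := le_totalDegree hmem
        rw [hpd] at hle
        have hsum2 : ((m + Finsupp.single i 1).sum fun _ e => e) =
            (m.sum fun _ e => e) + 1 := by
          rw [Finsupp.sum_add_index' (fun _ => rfl) (fun _ _ _ => rfl),
            Finsupp.sum_single_index rfl]
        omega
      exact absurd (Nat.find_min' hex ⟨q, hqJ, hqne, rfl⟩) (by omega)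
end

section
/- Let F : A → B be a left exact additive functor between abelian categories with enough injectives such that R²F = 0, and let f : M → N be a morphism in A with M and N both F-acyclic (R¹F M = R¹F N = 0). If the kernel and cokernel of f are both 'exceptional' (killed by F and R¹F), then F(f) : FM → FN is an isomorphism; moreover Im(f) is F-acyclic and F(M) ≅ F(Im f) ≅ F(N). -/
open CategoryTheory CategoryTheory.Limits

namespace Stmt11Aux

variable {C : Type*} [Category C] [Abelian C]

section Splice

variable {I Q : C}

/-- Splice `I` in degree 0 onto an injective resolution of `Q` shifted up by one. -/
noncomputable def spliceComplex (π : I ⟶ Q) (J : InjectiveResolution Q) :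
    CochainComplex C ℕ where
  X n := match n with
    | 0 => I
    | (n + 1) => J.cocomplex.X n
  d i j := match i, j with
    | 0, 1 => π ≫ J.ι.f 0
    | (i + 1), (j + 1) => J.cocomplex.d i j
    | _, _ => 0
  shape i j hij := by
    simp only [ComplexShape.up_Rel] at hij
    match i, j with
    | 0, 0 => rfl
    | 0, 1 => exact absurd rfl hij
    | 0, (j+2) => rfl
    | (i+1), 0 => rfl
    | (i+1), (j+1) =>
      exact J.cocomplex.shape i j (fun h => hij (by
        simp only [ComplexShape.up_Rel] at h; omega))
  d_comp_d' i j k hij hjk := by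
    simp only [ComplexShape.up_Rel] at hij hjk
    subst hij; subst hjk
    match i with
    | 0 =>
      show (π ≫ J.ι.f 0) ≫ J.cocomplex.d 0 1 = 0
      exact (Category.assoc π (J.ι.f 0) _).trans ((congrArg (fun x => π ≫ x)
        (InjectiveResolution.ι_f_zero_comp_complex_d J)).trans comp_zero)
    | (i+1) => exact J.cocomplex.d_comp_d _ _ _

lemma spliceComplex_d_01 (π : I ⟶ Q) (J : InjectiveResolution Q) :
    (spliceComplex π J).d 0 1 = π ≫ J.ι.f 0 := rfl

lemma spliceComplex_d_succ (π : I ⟶ Q) (J : InjectiveResolution Q) (n : ℕ) :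
    (spliceComplex π J).d (n + 1) (n + 2) = J.cocomplex.d n (n + 1) := rfl

end Splice

/-- Exactness is invariant under precomposing the first map with an epi. -/
lemma exact_iff_exact_epi_comp {A B X Y : C} (p : A ⟶ B) [Epi p] {i : B ⟶ X} {g : X ⟶ Y}
    (w : i ≫ g = 0) :
    (ShortComplex.mk (p ≫ i) g (by rw [Category.assoc, w, comp_zero])).Exact ↔
      (ShortComplex.mk i g w).Exact := by
  let φ : ShortComplex.mk (p ≫ i) g (by rw [Category.assoc, w, comp_zero]) ⟶
      ShortComplex.mk i g w :=
    { τ₁ := p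
      τ₂ := 𝟙 _
      τ₃ := 𝟙 _ }
  have h1 : Epi φ.τ₁ := by dsimp [φ]; infer_instance
  have h2 : IsIso φ.τ₂ := by dsimp [φ]; infer_instance
  have h3 : Mono φ.τ₃ := by dsimp [φ]; infer_instance
  exact ShortComplex.exact_iff_of_epi_of_isIso_of_mono φ

/-- Exactness is invariant under postcomposing the second map with a mono. -/
lemma exact_iff_exact_comp_mono {X Y A B : C} {f : X ⟶ Y} {g : Y ⟶ A} (m : A ⟶ B) [Mono m]
    (w : f ≫ g = 0) :
    (ShortComplex.mk f (g ≫ m) (by rw [← Category.assoc, w, zero_comp])).Exact ↔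
      (ShortComplex.mk f g w).Exact := by
  let φ : ShortComplex.mk f g w ⟶
      ShortComplex.mk f (g ≫ m) (by rw [← Category.assoc, w, zero_comp]) :=
    { τ₁ := 𝟙 _
      τ₂ := 𝟙 _
      τ₃ := m
      comm₂₃ := by simp }
  have h1 : Epi φ.τ₁ := by dsimp [φ]; infer_instance
  have h2 : IsIso φ.τ₂ := by dsimp [φ]; infer_instance
  have h3 : Mono φ.τ₃ := by dsimp [φ]; infer_instance
  exact (ShortComplex.exact_iff_of_epi_of_isIso_of_mono φ).symm

open CategoryTheory.Abelian
open scoped Pseudoelement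

lemma pseudo_id_apply {P : C} (a : P) : (𝟙 P : P ⟶ P) a = a :=
  Quotient.inductionOn a fun x => by
    rw [Pseudoelement.pseudoApply_mk']
    apply Quotient.sound
    exact ⟨_, 𝟙 _, 𝟙 _, inferInstance, inferInstance, by simp⟩

/-- The spliced injective resolution of `X` obtained from a mono `j : X ⟶ I` with `I`
injective and an injective resolution of `cokernel j`. -/
noncomputable def spliceRes {X I : C} (j : X ⟶ I) [Mono j] [Injective I]
    (J : InjectiveResolution (cokernel j)) : InjectiveResolution X where
  cocomplex := spliceComplex (cokernel.π j) J
  injective n := by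
    match n with
    | 0 => exact inferInstanceAs (Injective I)
    | (n+1) => exact J.injective n
  ι := (CochainComplex.fromSingle₀Equiv _ _).symm ⟨j, by
    show j ≫ (cokernel.π j ≫ J.ι.f 0) = 0
    exact (Category.assoc _ _ _).symm.trans ((congrArg (fun x => x ≫ J.ι.f 0)
      (cokernel.condition j)).trans zero_comp)⟩
  quasiIso := ⟨fun n => by
    cases n with
    | zero =>
      rw [CochainComplex.quasiIsoAt₀_iff, ShortComplex.quasiIso_iff_of_zeros]
      · refine (ShortComplex.exact_and_mono_f_iff_of_iso ?_).2
          ⟨(exact_iff_exact_comp_mono (J.ι.f 0) (cokernel.condition j)).2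
            (ShortComplex.exact_of_g_is_cokernel _ (cokernelIsCokernel j)), ?_⟩
        · exact ShortComplex.isoMk (Iso.refl _) (Iso.refl _) (Iso.refl _)
            (by erw [Category.id_comp, Category.comp_id]
                exact (CochainComplex.fromSingle₀Equiv_symm_apply_f_zero (C := spliceComplex (cokernel.π j) J)
                  (X := X) j _).symm)
            ((Category.id_comp _).trans ((Category.comp_id _).symm))
        · dsimp
          infer_instance
      all_goals rfl
    | succ n =>
      rw [quasiIsoAt_iff_exactAt]
      · rw [HomologicalComplex.exactAt_iff' _ n (n + 1) (n + 2) (by simp) (by simp)]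
        match n with
        | 0 =>
          exact (exact_iff_exact_epi_comp (cokernel.π j)
            (InjectiveResolution.ι_f_zero_comp_complex_d J)).2 J.exact₀
        | (m+1) => exact J.exact_succ m
      · apply CochainComplex.exactAt_succ_single_obj⟩

variable {D : Type*} [Category D] [Abelian D]

/-- If `i : B ⟶ X` is a kernel of `g : X ⟶ Y`, then the complex `A ⟶ B ⟶ X ⟶ Y` is
exact at `X` iff `p : A ⟶ B` is epi. -/
lemma exact_iff_epi_of_isKernel {A B X Y : D} (p : A ⟶ B) (i : B ⟶ X) (g : X ⟶ Y)
    (wi : i ≫ g = 0) (hi : IsLimit (KernelFork.ofι i wi))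
    (w : (p ≫ i) ≫ g = 0) :
    (ShortComplex.mk (p ≫ i) g w).Exact ↔ Epi p := by
  set S := ShortComplex.mk (p ≫ i) g w with hS
  let φ : B ⟶ S.cycles := S.liftCycles i wi
  have hφi : φ ≫ S.iCycles = i := S.liftCycles_i _ _
  have : IsIso φ := by
    let e := IsLimit.conePointUniqueUpToIso hi S.cyclesIsKernel
    have he : e.hom ≫ S.iCycles = i := by
      simpa using IsLimit.conePointUniqueUpToIso_hom_comp hi S.cyclesIsKernel
        WalkingParallelPair.zero
    have : φ = e.hom := by
      rw [← cancel_mono S.iCycles, hφi, he]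
    rw [this]
    infer_instance
  have htc : S.toCycles = p ≫ φ := by
    rw [← cancel_mono S.iCycles, Category.assoc, hφi, S.toCycles_i]
  rw [S.exact_iff_epi_toCycles, htc]
  constructor
  · intro h
    have : Epi ((p ≫ φ) ≫ inv φ) := epi_comp _ _
    simpa using this
  · intro h
    exact epi_comp _ _

variable (F : C ⥤ D) [F.Additive] [PreservesFiniteLimits F] [EnoughInjectives C]

/-- Dimension-shift description of `R¹F`: for a mono `j : X ⟶ I` into an injective,
`R¹F X = 0` iff `F` maps `I ⟶ cokernel j` to an epi. -/
lemma isZero_rightDerived_one_iff {X I : C} (j : X ⟶ I) [Mono j] [Injective I] :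
    IsZero ((F.rightDerived 1).obj X) ↔ Epi (F.map (cokernel.π j)) := by
  let J := InjectiveResolution.of (cokernel j)
  let R : InjectiveResolution X := spliceRes j J
  let K := (F.mapHomologicalComplex (ComplexShape.up ℕ)).obj R.cocomplex
  have e := R.isoRightDerivedObj F 1
  have h1 : IsZero ((F.rightDerived 1).obj X) ↔ IsZero (K.homology 1) :=
    ⟨fun h => h.of_iso e.symm, fun h => h.of_iso e⟩
  rw [h1, ← HomologicalComplex.exactAt_iff_isZero_homology,
    HomologicalComplex.exactAt_iff' _ 0 1 2 (by simp) (by simp)]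
  have wi : F.map (J.ι.f 0) ≫ F.map (J.cocomplex.d 0 1) = 0 := by
    rw [← F.map_comp, InjectiveResolution.ι_f_zero_comp_complex_d, F.map_zero]
  have hi : IsLimit (KernelFork.ofι (F.map (J.ι.f 0)) wi) :=
    KernelFork.mapIsLimit _ J.isLimitKernelFork F
  have w : (F.map (cokernel.π j) ≫ F.map (J.ι.f 0)) ≫ F.map (J.cocomplex.d 0 1) = 0 := by
    exact (Category.assoc _ _ _).trans ((congrArg (fun x => F.map (cokernel.π j) ≫ x) wi).trans
      comp_zero)
  have h2 : (K.sc' 0 1 2).Exact ↔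
      (ShortComplex.mk (F.map (cokernel.π j) ≫ F.map (J.ι.f 0))
        (F.map (J.cocomplex.d 0 1)) w).Exact := by
    refine ShortComplex.exact_iff_of_iso
      (ShortComplex.isoMk (Iso.refl _) (Iso.refl _) (Iso.refl _) ?_ ?_)
    · show 𝟙 _ ≫ (F.map (cokernel.π j) ≫ F.map (J.ι.f 0)) = K.d 0 1 ≫ 𝟙 _
      rw [Category.comp_id, Category.id_comp]
      show _ = F.map (R.cocomplex.d 0 1)
      refine (F.map_comp _ _).symm.trans ?_
      rfl
    · show 𝟙 _ ≫ F.map (J.cocomplex.d 0 1) = K.d 1 2 ≫ 𝟙 _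
      rw [Category.comp_id, Category.id_comp]
      rfl
  rw [h2, exact_iff_epi_of_isKernel (F.map (cokernel.π j)) (F.map (J.ι.f 0))
    (F.map (J.cocomplex.d 0 1)) wi hi w]



/-- First long-exact-sequence fragment: if `R¹F A = 0` then `F` maps `B ⟶ cokernel i`
to an epimorphism, for any mono `i : A ⟶ B`. -/
lemma epi_map_cokernel_π {A B : C} (i : A ⟶ B) [Mono i]
    (hA : IsZero ((F.rightDerived 1).obj A)) : Epi (F.map (cokernel.π i)) := by
  set I := Injective.under A with hI
  haveI : Injective I := by rw [hI]; infer_instance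
  set jA : A ⟶ I := Injective.ι A with hjA
  haveI : Mono jA := by rw [hjA]; exact Injective.ι_mono A
  set Q := cokernel jA with hQ
  set π : I ⟶ Q := cokernel.π jA with hπdef
  haveI hπepi : Epi (F.map π) := by
    rw [hπdef]; exact (isZero_rightDerived_one_iff F jA).1 hA
  set E := pushout jA i with hE
  set inl : I ⟶ E := pushout.inl jA i with hinl
  set inr : B ⟶ E := pushout.inr jA i with hinr
  have hcond : jA ≫ inl = i ≫ inr := pushout.condition
  have hw1 : jA ≫ (0 : I ⟶ cokernel i) = i ≫ cokernel.π i := by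
    rw [comp_zero, cokernel.condition]
  set s : E ⟶ cokernel i := pushout.desc 0 (cokernel.π i) hw1 with hsdef
  have hinl_s : inl ≫ s = 0 := pushout.inl_desc _ _ _
  have hinr_s : inr ≫ s = cokernel.π i := pushout.inr_desc _ _ _
  have hw2 : jA ≫ π = i ≫ (0 : B ⟶ Q) := by rw [comp_zero, cokernel.condition]
  set t : E ⟶ Q := pushout.desc π 0 hw2 with htdef
  have hinl_t : inl ≫ t = π := pushout.inl_desc _ _ _
  have hinr_t : inr ≫ t = 0 := pushout.inr_desc _ _ _
  haveI hepis : Epi s := epi_of_epi_fac hinr_s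
  set ψ : E ⟶ I := pushout.desc (𝟙 I) (Injective.factorThru jA i)
    (by rw [Category.comp_id, Injective.comp_factorThru]) with hψdef
  have hinl_ψ : inl ≫ ψ = 𝟙 I := pushout.inl_desc _ _ _
  -- `s` is a cokernel of `inl`
  have hcs : IsColimit (CokernelCofork.ofπ s hinl_s) := by
    refine CokernelCofork.IsColimit.ofπ' s hinl_s (fun {W} k hk => ?_)
    refine ⟨cokernel.desc i (inr ≫ k)
      (by rw [← Category.assoc, ← hcond, Category.assoc, hk, comp_zero]), ?_⟩
    apply pushout.hom_ext
    · rw [← hinl, ← Category.assoc, hinl_s, zero_comp, hk]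
    · rw [← hinr, ← Category.assoc, hinr_s, cokernel.π_desc]
  -- `t` is a cokernel of `inr`
  have hct : IsColimit (CokernelCofork.ofπ t hinr_t) := by
    haveI : Epi t := epi_of_epi_fac hinl_t
    refine CokernelCofork.IsColimit.ofπ' t hinr_t (fun {W} k hk => ?_)
    refine ⟨cokernel.desc jA (inl ≫ k)
      (by rw [← Category.assoc, hcond, Category.assoc, hk, comp_zero]), ?_⟩
    apply pushout.hom_ext
    · rw [← hinl, ← Category.assoc, hinl_t, hπdef, cokernel.π_desc]
    · rw [← hinr, ← Category.assoc, hinr_t, zero_comp, hk]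
  haveI : Mono inr := by rw [hinr]; exact Abelian.mono_pushout_of_mono_f _ _
  -- `inr` is a kernel of `t`
  have hkt : IsLimit (KernelFork.ofι inr
      (CokernelCofork.condition (CokernelCofork.ofπ t hinr_t))) :=
    Abelian.monoIsKernelOfCokernel _ hct
  have hSD : (ShortComplex.mk (F.map inr) (F.map t)
      (by rw [← F.map_comp, hinr_t, F.map_zero])).Exact :=
    ShortComplex.exact_of_f_is_kernel _ (KernelFork.mapIsLimit _ hkt F)
  -- section of `s`
  have he' : inl ≫ (𝟙 E - ψ ≫ inl) = 0 := by
    rw [Preadditive.comp_sub, Category.comp_id, ← Category.assoc, hinl_ψ,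
      Category.id_comp, sub_self]
  obtain ⟨σ0, hσ0⟩ := CokernelCofork.IsColimit.desc' hcs (𝟙 E - ψ ≫ inl) he'
  let σ : cokernel i ⟶ E := σ0
  have hσ' : s ≫ σ = 𝟙 E - ψ ≫ inl := hσ0
  have hσs : σ ≫ s = 𝟙 (cokernel i) := by
    rw [← cancel_epi s, ← Category.assoc, hσ', Preadditive.sub_comp, Category.id_comp,
      Category.assoc, hinl_s, comp_zero, sub_zero]
    exact (Category.comp_id _).symm
  -- pseudoelement chase in `D`
  apply Pseudoelement.epi_of_pseudo_surjective
  intro c0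
  obtain ⟨x, hx⟩ := Pseudoelement.pseudo_surjective_of_epi (F.map π)
    ((F.map t) ((F.map σ) c0))
  have heq : (F.map t) ((F.map σ) c0) = (F.map t) ((F.map inl) x) := by
    conv_rhs => rw [← Pseudoelement.comp_apply, ← F.map_comp, hinl_t]
    exact hx.symm
  obtain ⟨z, hz0, hz⟩ := Pseudoelement.sub_of_eq_image (F.map t)
    ((F.map σ) c0) ((F.map inl) x) heq
  have hy0 : (F.map s) ((F.map inl) x) = 0 := by
    rw [← Pseudoelement.comp_apply, ← F.map_comp, hinl_s, F.map_zero,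
      Pseudoelement.zero_apply]
  have hzs : (F.map s) z = c0 := by
    rw [hz _ (F.map s) hy0, ← Pseudoelement.comp_apply, ← F.map_comp, hσs, F.map_id,
      pseudo_id_apply]
  obtain ⟨b0, hb0⟩ := Pseudoelement.pseudo_exact_of_exact hSD z hz0
  refine ⟨b0, ?_⟩
  rw [← hinr_s, F.map_comp, Pseudoelement.comp_apply, hb0, hzs]

/-- Second long-exact-sequence fragment: if `F (cokernel i) = 0` and `R¹F B = 0`, then
`R¹F A = 0`, for any mono `i : A ⟶ B`. -/
lemma isZero_rightDerived_one_of_mono {A B : C} (i : A ⟶ B) [Mono i]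
    (hC : IsZero (F.obj (cokernel i)))
    (hB : IsZero ((F.rightDerived 1).obj B)) :
    IsZero ((F.rightDerived 1).obj A) := by
  set I := Injective.under B with hI
  haveI : Injective I := by rw [hI]; infer_instance
  set jB : B ⟶ I := Injective.ι B with hjB
  haveI : Mono jB := by rw [hjB]; exact Injective.ι_mono B
  set jA : A ⟶ I := i ≫ jB with hjA
  haveI : Mono jA := mono_comp _ _
  set πA : I ⟶ cokernel jA := cokernel.π jA with hπAdef
  set πB : I ⟶ cokernel jB := cokernel.π jB with hπBdef
  haveI hπBepi : Epi (F.map πB) := by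
    rw [hπBdef]; exact (isZero_rightDerived_one_iff F jB).1 hB
  set g : cokernel jA ⟶ cokernel jB := cokernel.desc jA πB
    (by rw [hjA, Category.assoc, cokernel.condition, comp_zero]) with hgdef
  have hg : πA ≫ g = πB := cokernel.π_desc _ _ _
  set c : cokernel i ⟶ cokernel jA := cokernel.desc i (jB ≫ πA)
    (by rw [← Category.assoc, ← hjA, cokernel.condition]) with hcdef
  have hc : cokernel.π i ≫ c = jB ≫ πA := cokernel.π_desc _ _ _
  -- `c` is mono (pseudoelement chase in `C`)
  haveI hmc : Mono c := by
    apply Pseudoelement.mono_of_zero_of_map_zero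
    intro a ha
    obtain ⟨b, hb⟩ := Pseudoelement.pseudo_surjective_of_epi (cokernel.π i) a
    have hπAb : πA (jB b) = 0 := by
      rw [← Pseudoelement.comp_apply, ← hc, Pseudoelement.comp_apply, hb, ha]
    have hexA : (ShortComplex.mk jA πA (cokernel.condition jA)).Exact :=
      ShortComplex.exact_of_g_is_cokernel _ (cokernelIsCokernel jA)
    obtain ⟨a', ha'⟩ := Pseudoelement.pseudo_exact_of_exact hexA (jB b)
      (by simpa using hπAb)
    have : jB (i a') = jB b := by
      rw [← Pseudoelement.comp_apply, ← hjA, ha']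
    have hia : i a' = b := Pseudoelement.pseudo_injective_of_mono _ this
    rw [← hb, ← hia, ← Pseudoelement.comp_apply, cokernel.condition,
      Pseudoelement.zero_apply]
  -- exactness of `cokernel i ⟶ cokernel jA ⟶ cokernel jB` (pseudoelement chase)
  have hw : c ≫ g = 0 := by
    rw [← cancel_epi (cokernel.π i), ← Category.assoc, hc, Category.assoc, hg, comp_zero]
    exact cokernel.condition jB
  have hex : (ShortComplex.mk c g hw).Exact := by
    apply Pseudoelement.exact_of_pseudo_exact
    intro x hx
    obtain ⟨y, hy⟩ := Pseudoelement.pseudo_surjective_of_epi πA x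
    have hyB : πB y = 0 := by
      rw [← hg, Pseudoelement.comp_apply, hy]; exact hx
    have hexB : (ShortComplex.mk jB πB (cokernel.condition jB)).Exact :=
      ShortComplex.exact_of_g_is_cokernel _ (cokernelIsCokernel jB)
    obtain ⟨b, hb⟩ := Pseudoelement.pseudo_exact_of_exact hexB y hyB
    refine ⟨cokernel.π i b, ?_⟩
    rw [← Pseudoelement.comp_apply, hc, Pseudoelement.comp_apply, hb, hy]
  -- map to `D` : `F.map g` is mono
  have hexD : ((ShortComplex.mk c g hw).map F).Exact :=
    hex.map_of_mono_of_preservesKernel F hmc inferInstance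
  haveI hmono : Mono (F.map g) :=
    hexD.mono_g (hC.eq_of_src _ _)
  -- `F.map g` is epi, hence iso, hence `F.map πA` is epi
  haveI hepi : Epi (F.map g) := by
    have : F.map πA ≫ F.map g = F.map πB := by rw [← F.map_comp, hg]
    exact epi_of_epi_fac this
  haveI : IsIso (F.map g) := isIso_of_mono_of_epi _
  have hπAepi : Epi (F.map πA) := by
    have h1 : F.map πA = F.map πB ≫ inv (F.map g) :=
      (IsIso.eq_comp_inv _).2 (by rw [← F.map_comp, hg])
    rw [h1]
    exact epi_comp _ _
  exact (isZero_rightDerived_one_iff F jA).2 hπAepi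

end Stmt11Aux

/-- Let `F` be a left exact additive functor between abelian categories with enough
injectives such that `R²F = 0`. If `f : M → N` is a morphism with `M`, `N` both
`F`-acyclic and with exceptional kernel and cokernel (killed by `F` and `R¹F`), then
`F f` is an isomorphism, the image of `f` is `F`-acyclic, and
`F M ≅ F (Im f) ≅ F N`. -/
theorem stmt_11 {C D : Type*} [Category C] [Category D] [Abelian C] [Abelian D]
    [EnoughInjectives C]
    (F : C ⥤ D) [F.Additive] [PreservesFiniteLimits F]
    (hR2 : ∀ X : C, IsZero ((F.rightDerived 2).obj X))
    {M N : C} (f : M ⟶ N)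
    (hM : IsZero ((F.rightDerived 1).obj M))
    (hN : IsZero ((F.rightDerived 1).obj N))
    (hker : IsZero (F.obj (kernel f)) ∧ IsZero ((F.rightDerived 1).obj (kernel f)))
    (hcoker : IsZero (F.obj (cokernel f)) ∧
      IsZero ((F.rightDerived 1).obj (cokernel f))) :
    IsIso (F.map f) ∧
    IsZero ((F.rightDerived 1).obj (Abelian.image f)) ∧
    Nonempty (F.obj M ≅ F.obj (Abelian.image f)) ∧
    Nonempty (F.obj (Abelian.image f) ≅ F.obj N) := by
  -- `F` applied to `M ⟶ image f` is an isomorphism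
  have hp : IsIso (F.map (Abelian.factorThruImage f)) := by
    have w1 : kernel.ι f ≫ Abelian.factorThruImage f = 0 := by
      rw [← cancel_mono (Abelian.image.ι f), Category.assoc, Abelian.image.fac,
        kernel.condition, zero_comp]
    have hexC : (ShortComplex.mk (kernel.ι f) (Abelian.factorThruImage f) w1).Exact := by
      have h0 : (ShortComplex.mk (kernel.ι f) f (kernel.condition f)).Exact :=
        ShortComplex.exact_of_f_is_kernel _ (kernelIsKernel f)
      have h1 : ShortComplex.mk (kernel.ι f) f (kernel.condition f) ≅
          ShortComplex.mk (kernel.ι f) (Abelian.factorThruImage f ≫ Abelian.image.ι f)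
            (by rw [← Category.assoc, w1, zero_comp]) :=
        ShortComplex.isoMk (Iso.refl _) (Iso.refl _) (Iso.refl _) (by simp)
          (by simp [Abelian.image.fac])
      exact (Stmt11Aux.exact_iff_exact_comp_mono (Abelian.image.ι f) w1).1
        ((ShortComplex.exact_iff_of_iso h1).1 h0)
    have hexD := hexC.map_of_mono_of_preservesKernel F inferInstance inferInstance
    have hf0 : ((ShortComplex.mk (kernel.ι f) (Abelian.factorThruImage f) w1).map F).f = 0 :=
      hker.1.eq_of_src _ _
    haveI hmono : Mono (F.map (Abelian.factorThruImage f)) := hexD.mono_g hf0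
    haveI hepi : Epi (F.map (Abelian.factorThruImage f)) := by
      haveI h := Stmt11Aux.epi_map_cokernel_π F (kernel.ι f) hker.2
      have hfac : Abelian.factorThruImage f =
          Abelian.coimage.π f ≫ Abelian.coimageImageComparison f := by
        rw [← cancel_mono (Abelian.image.ι f), Abelian.image.fac, Category.assoc,
          Abelian.coimage_image_factorisation]
      rw [hfac, F.map_comp]
      haveI : Epi (F.map (Abelian.coimage.π f)) := h
      exact epi_comp _ _
    exact isIso_of_mono_of_epi _
  -- `F` applied to `image f ⟶ N` is an isomorphism
  have hι : IsIso (F.map (Abelian.image.ι f)) := by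
    have w2 : Abelian.image.ι f ≫ cokernel.π f = 0 := kernel.condition _
    have hexC : (ShortComplex.mk (Abelian.image.ι f) (cokernel.π f) w2).Exact :=
      ShortComplex.exact_of_f_is_kernel _ (kernelIsKernel (cokernel.π f))
    haveI hmono : Mono (F.map (Abelian.image.ι f)) :=
      mono_of_isLimit_fork (KernelFork.mapIsLimit _ (kernelIsKernel (cokernel.π f)) F)
    have hexD := hexC.map_of_mono_of_preservesKernel F inferInstance inferInstance
    haveI hepi : Epi (F.map (Abelian.image.ι f)) := hexD.epi_f (hcoker.1.eq_of_tgt _ _)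
    exact isIso_of_mono_of_epi _
  refine ⟨?_, ?_, ⟨asIso (F.map (Abelian.factorThruImage f))⟩,
    ⟨asIso (F.map (Abelian.image.ι f))⟩⟩
  · rw [← Abelian.image.fac f, F.map_comp]
    infer_instance
  · have e : cokernel (Abelian.image.ι f) ≅ cokernel f :=
      (cokernelEpiComp (Abelian.factorThruImage f) (Abelian.image.ι f)).symm ≪≫
        cokernelIsoOfEq (Abelian.image.fac f)
    exact Stmt11Aux.isZero_rightDerived_one_of_mono F (Abelian.image.ι f)
      (hcoker.1.of_iso (F.mapIso e)) hN
end

section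
/- Let A be a commutative R-algebra with a bracket {,} : A × A → A that is an alternating biderivation, and let B be a commutative A-algebra such that the natural map Ω_{A/R} ⊗_A B → Ω_{B/R} is an isomorphism (e.g. B étale over A, or a localization of A). Then there is a unique alternating biderivation on B restricting to that of A, and if the bracket on A satisfies the Jacobi identity then so does the bracket on B. -/
namespace Stmt15Aux

variable {R A B : Type*} [CommRing R] [CommRing A] [CommRing B]
  [Algebra R A] [Algebra R B] [Algebra A B] [IsScalarTower R A B]

lemma algMap_smul (r : R) (x : A) :
    algebraMap A B (r • x) = r • algebraMap A B x := by
  rw [Algebra.smul_def, map_mul, ← IsScalarTower.algebraMap_apply, ← Algebra.smul_def]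

lemma spanA (h : Function.Surjective (KaehlerDifferential.mapBaseChange R A B)) :
    Submodule.span B (Set.range fun a : A => KaehlerDifferential.D R B (algebraMap A B a)) = ⊤ := by
  rw [eq_top_iff]
  rintro x -
  obtain ⟨y, rfl⟩ := h x
  induction y using TensorProduct.induction_on with
  | zero => simp
  | add u v hu hv => rw [map_add]; exact Submodule.add_mem _ hu hv
  | tmul b ω =>
    rw [KaehlerDifferential.mapBaseChange_tmul]
    refine Submodule.smul_mem _ _ ?_
    have hω : ω ∈ Submodule.span A (Set.range (KaehlerDifferential.D R A)) := by
      rw [KaehlerDifferential.span_range_derivation]; trivial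
    induction hω using Submodule.span_induction with
    | mem x hx =>
      obtain ⟨a, rfl⟩ := hx
      rw [KaehlerDifferential.map_D]
      exact Submodule.subset_span ⟨a, rfl⟩
    | zero => simp
    | add x y _ _ hx hy => rw [map_add]; exact Submodule.add_mem _ hx hy
    | smul a x _ hx =>
      rw [map_smul, ← algebraMap_smul B a]
      exact Submodule.smul_mem _ _ hx

/-- Two derivations on `B` agreeing on the image of `A` are equal. -/
lemma derEq (h : Function.Surjective (KaehlerDifferential.mapBaseChange R A B))
    (D₁ D₂ : Derivation R B B)
    (hD : ∀ a : A, D₁ (algebraMap A B a) = D₂ (algebraMap A B a)) : D₁ = D₂ := by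
  have hlift : D₁.liftKaehlerDifferential = D₂.liftKaehlerDifferential := by
    refine LinearMap.ext_on (spanA h) ?_
    rintro _ ⟨a, rfl⟩
    simp [hD a]
  ext b
  rw [← Derivation.liftKaehlerDifferential_comp_D D₁ b, hlift,
    Derivation.liftKaehlerDifferential_comp_D]

/-- Extend a derivation `A → B` to a derivation `B → B`. -/
noncomputable def extendDer (hΩ : Function.Bijective (KaehlerDifferential.mapBaseChange R A B))
    (D : Derivation R A B) : Derivation R B B :=
  ((D.liftKaehlerDifferential.liftBaseChange B) ∘ₗ
    (LinearEquiv.ofBijective _ hΩ).symm.toLinearMap).compDer (KaehlerDifferential.D R B)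

lemma extendDer_algebraMap (hΩ : Function.Bijective (KaehlerDifferential.mapBaseChange R A B))
    (D : Derivation R A B) (a : A) :
    extendDer hΩ D (algebraMap A B a) = D a := by
  have h1 : (LinearEquiv.ofBijective _ hΩ) ((1 : B) ⊗ₜ[A] KaehlerDifferential.D R A a)
      = KaehlerDifferential.D R B (algebraMap A B a) := by
    show KaehlerDifferential.mapBaseChange R A B _ = _
    rw [KaehlerDifferential.mapBaseChange_tmul, one_smul, KaehlerDifferential.map_D]
  have h2 : (LinearEquiv.ofBijective _ hΩ).symm (KaehlerDifferential.D R B (algebraMap A B a))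
      = (1 : B) ⊗ₜ[A] KaehlerDifferential.D R A a := by
    rw [← h1, LinearEquiv.symm_apply_apply]
  show (D.liftKaehlerDifferential.liftBaseChange B)
      ((LinearEquiv.ofBijective _ hΩ).symm (KaehlerDifferential.D R B (algebraMap A B a))) = D a
  rw [h2, LinearMap.liftBaseChange_tmul, one_smul, Derivation.liftKaehlerDifferential_comp_D]


section Ext

variable {R A B : Type*} [CommRing R] [CommRing A] [CommRing B]
  [Algebra R A] [Algebra R B] [Algebra A B] [IsScalarTower R A B]
  (hΩ : Function.Bijective (KaehlerDifferential.mapBaseChange R A B))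
  (bA : A → A → A)
  (haddA₁ : ∀ f g h : A, bA (f + g) h = bA f h + bA g h)
  (hsmulA₁ : ∀ (r : R) (f g : A), bA (r • f) g = r • bA f g)
  (haddA₂ : ∀ f g h : A, bA f (g + h) = bA f g + bA f h)
  (hsmulA₂ : ∀ (r : R) (f g : A), bA f (r • g) = r • bA f g)
  (hleibA₁ : ∀ f g h : A, bA (f * g) h = f * bA g h + g * bA f h)
  (hleibA₂ : ∀ f g h : A, bA f (g * h) = g * bA f h + h * bA f g)

/-- For `a : A`, the derivation `g ↦ bA a g : A → B`. -/
def derA (a : A) : Derivation R A B :=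
  Derivation.mk'
    { toFun := fun g => algebraMap A B (bA a g)
      map_add' := fun g h => by rw [haddA₂, map_add]
      map_smul' := fun r g => by rw [RingHom.id_apply, hsmulA₂, algMap_smul] }
    (fun g h => by
      dsimp only [LinearMap.coe_mk, AddHom.coe_mk]
      rw [hleibA₂, map_add, map_mul, map_mul, Algebra.smul_def, Algebra.smul_def])

@[simp] lemma derA_apply (a g : A) :
    derA bA haddA₂ hsmulA₂ hleibA₂ a g = algebraMap A B (bA a g) := rfl

/-- The extension of `g ↦ bA a g` to a derivation `B → B`. -/
noncomputable def E (a : A) : Derivation R B B :=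
  extendDer hΩ (derA bA haddA₂ hsmulA₂ hleibA₂ a)

lemma E_algebraMap (a g : A) :
    E hΩ bA haddA₂ hsmulA₂ hleibA₂ a (algebraMap A B g) = algebraMap A B (bA a g) :=
  extendDer_algebraMap hΩ _ g

include haddA₁ in
lemma E_add (a a' : A) :
    E hΩ bA haddA₂ hsmulA₂ hleibA₂ (a + a') =
      E hΩ bA haddA₂ hsmulA₂ hleibA₂ a + E hΩ bA haddA₂ hsmulA₂ hleibA₂ a' := by
  refine derEq hΩ.surjective _ _ fun g => ?_
  rw [Derivation.add_apply, E_algebraMap, E_algebraMap, E_algebraMap, haddA₁, map_add]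

include hsmulA₁ in
lemma E_smul (r : R) (a : A) :
    E hΩ bA haddA₂ hsmulA₂ hleibA₂ (r • a) = r • E hΩ bA haddA₂ hsmulA₂ hleibA₂ a := by
  refine derEq hΩ.surjective _ _ fun g => ?_
  rw [Derivation.smul_apply, E_algebraMap, E_algebraMap, hsmulA₁, algMap_smul]

include hleibA₁ in
lemma E_mul (a a' : A) :
    E hΩ bA haddA₂ hsmulA₂ hleibA₂ (a * a') =
      algebraMap A B a • E hΩ bA haddA₂ hsmulA₂ hleibA₂ a' +
        algebraMap A B a' • E hΩ bA haddA₂ hsmulA₂ hleibA₂ a := by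
  refine derEq hΩ.surjective _ _ fun g => ?_
  rw [Derivation.add_apply, Derivation.smul_apply, Derivation.smul_apply,
    E_algebraMap, E_algebraMap, E_algebraMap, hleibA₁, map_add, map_mul, map_mul,
    smul_eq_mul, smul_eq_mul]

include haddA₁ hsmulA₁ hleibA₁ in
/-- For fixed `b : B`, the derivation `a ↦ E a b : A → B`. -/
noncomputable def derG (b : B) : Derivation R A B :=
  Derivation.mk'
    { toFun := fun a => E hΩ bA haddA₂ hsmulA₂ hleibA₂ a b
      map_add' := fun a a' => by
        rw [E_add hΩ bA haddA₁ haddA₂ hsmulA₂ hleibA₂, Derivation.add_apply]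
      map_smul' := fun r a => by
        rw [RingHom.id_apply, E_smul hΩ bA hsmulA₁ haddA₂ hsmulA₂ hleibA₂,
          Derivation.smul_apply] }
    (fun a a' => by
      dsimp only [LinearMap.coe_mk, AddHom.coe_mk]
      rw [E_mul hΩ bA haddA₂ hsmulA₂ hleibA₁ hleibA₂, Derivation.add_apply,
        Derivation.smul_apply, Derivation.smul_apply]
      simp [Algebra.smul_def])

/-- The extension `G b : B → B`, so that `bB f g = G g f`. -/
noncomputable def G (b : B) : Derivation R B B :=
  extendDer hΩ (derG hΩ bA haddA₁ hsmulA₁ haddA₂ hsmulA₂ hleibA₁ hleibA₂ b)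

lemma G_algebraMap (a : A) (b : B) :
    G hΩ bA haddA₁ hsmulA₁ haddA₂ hsmulA₂ hleibA₁ hleibA₂ b (algebraMap A B a) =
      E hΩ bA haddA₂ hsmulA₂ hleibA₂ a b :=
  extendDer_algebraMap hΩ _ a

lemma G_algebraMap₂ (a a' : A) :
    G hΩ bA haddA₁ hsmulA₁ haddA₂ hsmulA₂ hleibA₁ hleibA₂ (algebraMap A B a')
        (algebraMap A B a) = algebraMap A B (bA a a') := by
  rw [G_algebraMap, E_algebraMap]

lemma G_add (b b' : B) :
    G hΩ bA haddA₁ hsmulA₁ haddA₂ hsmulA₂ hleibA₁ hleibA₂ (b + b') =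
      G hΩ bA haddA₁ hsmulA₁ haddA₂ hsmulA₂ hleibA₁ hleibA₂ b +
        G hΩ bA haddA₁ hsmulA₁ haddA₂ hsmulA₂ hleibA₁ hleibA₂ b' := by
  refine derEq hΩ.surjective _ _ fun a => ?_
  rw [Derivation.add_apply, G_algebraMap, G_algebraMap, G_algebraMap, map_add]

lemma G_smul (r : R) (b : B) :
    G hΩ bA haddA₁ hsmulA₁ haddA₂ hsmulA₂ hleibA₁ hleibA₂ (r • b) =
      r • G hΩ bA haddA₁ hsmulA₁ haddA₂ hsmulA₂ hleibA₁ hleibA₂ b := by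
  refine derEq hΩ.surjective _ _ fun a => ?_
  rw [Derivation.smul_apply, G_algebraMap, G_algebraMap, Derivation.map_smul]

lemma G_mul (b b' : B) :
    G hΩ bA haddA₁ hsmulA₁ haddA₂ hsmulA₂ hleibA₁ hleibA₂ (b * b') =
      b • G hΩ bA haddA₁ hsmulA₁ haddA₂ hsmulA₂ hleibA₁ hleibA₂ b' +
        b' • G hΩ bA haddA₁ hsmulA₁ haddA₂ hsmulA₂ hleibA₁ hleibA₂ b := by
  refine derEq hΩ.surjective _ _ fun a => ?_
  rw [Derivation.add_apply, Derivation.smul_apply, Derivation.smul_apply,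
    G_algebraMap, G_algebraMap, G_algebraMap, Derivation.leibniz, smul_eq_mul, smul_eq_mul]


/-- The derivation `g ↦ G g f`, i.e. `g ↦ bB f g`. -/
noncomputable def derMix (f : B) : Derivation R B B :=
  Derivation.mk'
    { toFun := fun g => G hΩ bA haddA₁ hsmulA₁ haddA₂ hsmulA₂ hleibA₁ hleibA₂ g f
      map_add' := fun g g' => by
        rw [G_add hΩ bA haddA₁ hsmulA₁ haddA₂ hsmulA₂ hleibA₁ hleibA₂,
          Derivation.add_apply]
      map_smul' := fun r g => by
        rw [RingHom.id_apply, G_smul hΩ bA haddA₁ hsmulA₁ haddA₂ hsmulA₂ hleibA₁ hleibA₂,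
          Derivation.smul_apply] }
    (fun g g' => by
      dsimp only [LinearMap.coe_mk, AddHom.coe_mk]
      rw [G_mul hΩ bA haddA₁ hsmulA₁ haddA₂ hsmulA₂ hleibA₁ hleibA₂, Derivation.add_apply,
        Derivation.smul_apply, Derivation.smul_apply, smul_eq_mul, smul_eq_mul])

@[simp] lemma derMix_apply (f g : B) :
    derMix hΩ bA haddA₁ hsmulA₁ haddA₂ hsmulA₂ hleibA₁ hleibA₂ f g =
      G hΩ bA haddA₁ hsmulA₁ haddA₂ hsmulA₂ hleibA₁ hleibA₂ g f := rfl

/-- The derivation `f ↦ (lift of derMix f)` into `Ω[B⁄R] →ₗ[B] B`. -/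
noncomputable def Psi0 : Derivation R B (Ω[B⁄R] →ₗ[B] B) :=
  Derivation.mk'
    { toFun := fun f =>
        (derMix hΩ bA haddA₁ hsmulA₁ haddA₂ hsmulA₂ hleibA₁ hleibA₂ f).liftKaehlerDifferential
      map_add' := fun f f' => by
        refine LinearMap.ext_on (KaehlerDifferential.span_range_derivation R B) ?_
        rintro _ ⟨g, rfl⟩
        simp only [Derivation.liftKaehlerDifferential_comp_D, LinearMap.add_apply,
          derMix_apply, map_add]
      map_smul' := fun r f => by
        rw [RingHom.id_apply]
        refine LinearMap.ext_on (KaehlerDifferential.span_range_derivation R B) ?_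
        rintro _ ⟨g, rfl⟩
        simp only [Derivation.liftKaehlerDifferential_comp_D, LinearMap.smul_apply,
          derMix_apply, Derivation.map_smul] }
    (fun f f' => by
      dsimp only [LinearMap.coe_mk, AddHom.coe_mk]
      refine LinearMap.ext_on (KaehlerDifferential.span_range_derivation R B) ?_
      rintro _ ⟨g, rfl⟩
      simp only [Derivation.liftKaehlerDifferential_comp_D, LinearMap.add_apply,
        LinearMap.smul_apply, derMix_apply, Derivation.leibniz, smul_eq_mul])

/-- The pairing `Ω[B⁄R] →ₗ[B] Ω[B⁄R] →ₗ[B] B`. -/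
noncomputable def Psi : Ω[B⁄R] →ₗ[B] (Ω[B⁄R] →ₗ[B] B) :=
  (Psi0 hΩ bA haddA₁ hsmulA₁ haddA₂ hsmulA₂ hleibA₁ hleibA₂).liftKaehlerDifferential

lemma Psi_D_D (f g : B) :
    Psi hΩ bA haddA₁ hsmulA₁ haddA₂ hsmulA₂ hleibA₁ hleibA₂ (KaehlerDifferential.D R B f)
        (KaehlerDifferential.D R B g) =
      G hΩ bA haddA₁ hsmulA₁ haddA₂ hsmulA₂ hleibA₁ hleibA₂ g f := by
  rw [Psi, Derivation.liftKaehlerDifferential_comp_D]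
  show (derMix hΩ bA haddA₁ hsmulA₁ haddA₂ hsmulA₂ hleibA₁ hleibA₂
    f).liftKaehlerDifferential _ = _
  rw [Derivation.liftKaehlerDifferential_comp_D, derMix_apply]

section Alt

variable (haltA : ∀ f : A, bA f f = 0)

include haddA₁ haddA₂ haltA in
lemma antisymA (a a' : A) : bA a a' + bA a' a = 0 := by
  have h := haltA (a + a')
  rw [haddA₁, haddA₂, haddA₂, haltA a, haltA a'] at h
  linear_combination h

include haltA in
lemma Psi_antisym (ω ω' : Ω[B⁄R]) :
    Psi hΩ bA haddA₁ hsmulA₁ haddA₂ hsmulA₂ hleibA₁ hleibA₂ ω ω' +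
      Psi hΩ bA haddA₁ hsmulA₁ haddA₂ hsmulA₂ hleibA₁ hleibA₂ ω' ω = 0 := by
  set P := Psi hΩ bA haddA₁ hsmulA₁ haddA₂ hsmulA₂ hleibA₁ hleibA₂ with hP
  have key : ∀ (a : A) (ω : Ω[B⁄R]),
      P ω (KaehlerDifferential.D R B (algebraMap A B a)) +
        P (KaehlerDifferential.D R B (algebraMap A B a)) ω = 0 := by
    intro a ω
    have hω : ω ∈ Submodule.span B
        (Set.range fun a : A => KaehlerDifferential.D R B (algebraMap A B a)) := by
      rw [spanA hΩ.surjective]; trivial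
    induction hω using Submodule.span_induction with
    | mem x hx =>
      obtain ⟨a', rfl⟩ := hx
      rw [hP, Psi_D_D, Psi_D_D, G_algebraMap₂, G_algebraMap₂, ← map_add,
        antisymA bA haddA₁ haddA₂ haltA, map_zero]
    | zero => simp
    | add x y _ _ hx hy =>
      simp only [map_add, LinearMap.add_apply]
      linear_combination hx + hy
    | smul b x _ hx =>
      rw [map_smul, LinearMap.smul_apply, LinearMap.map_smul, ← smul_add, hx, smul_zero]
  have hω' : ω' ∈ Submodule.span B
      (Set.range fun a : A => KaehlerDifferential.D R B (algebraMap A B a)) := by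
    rw [spanA hΩ.surjective]; trivial
  induction hω' using Submodule.span_induction with
  | mem x hx => obtain ⟨a, rfl⟩ := hx; exact key a ω
  | zero => simp
  | add x y _ _ hx hy =>
    simp only [map_add, LinearMap.add_apply]
    linear_combination hx + hy
  | smul b x _ hx =>
    rw [map_smul, LinearMap.map_smul, LinearMap.smul_apply, ← smul_add, hx, smul_zero]

include haltA in
lemma Psi_diag (ω : Ω[B⁄R]) :
    Psi hΩ bA haddA₁ hsmulA₁ haddA₂ hsmulA₂ hleibA₁ hleibA₂ ω ω = 0 := by
  set P := Psi hΩ bA haddA₁ hsmulA₁ haddA₂ hsmulA₂ hleibA₁ hleibA₂ with hP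
  have hω : ω ∈ Submodule.span B
      (Set.range fun a : A => KaehlerDifferential.D R B (algebraMap A B a)) := by
    rw [spanA hΩ.surjective]; trivial
  induction hω using Submodule.span_induction with
  | mem x hx =>
    obtain ⟨a, rfl⟩ := hx
    rw [hP, Psi_D_D, G_algebraMap₂, haltA, map_zero]
  | zero => simp
  | add x y _ _ hx hy =>
    simp only [map_add, LinearMap.add_apply]
    have := Psi_antisym hΩ bA haddA₁ hsmulA₁ haddA₂ hsmulA₂ hleibA₁ hleibA₂ haltA x y
    rw [← hP] at this
    linear_combination hx + hy + this
  | smul b x _ hx =>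
    simp only [map_smul, LinearMap.smul_apply, hx, smul_zero]

include haltA in
lemma G_diag (f : B) :
    G hΩ bA haddA₁ hsmulA₁ haddA₂ hsmulA₂ hleibA₁ hleibA₂ f f = 0 := by
  rw [← Psi_D_D hΩ bA haddA₁ hsmulA₁ haddA₂ hsmulA₂ hleibA₁ hleibA₂ f f,
    Psi_diag hΩ bA haddA₁ hsmulA₁ haddA₂ hsmulA₂ hleibA₁ hleibA₂ haltA]

end Alt

end Ext

end Stmt15Aux


open Stmt15Aux in
/-- Let `A` be a commutative `R`-algebra with an alternating biderivation `bA`, and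
`B` a commutative `A`-algebra such that the natural map
`Ω_{A/R} ⊗_A B → Ω_{B/R}` is an isomorphism (e.g. `B` étale over `A` or a
localization).  Then there is a unique alternating biderivation on `B` restricting
to `bA`, and any such biderivation satisfies the Jacobi identity whenever `bA`
does. -/
theorem stmt_15 (R A B : Type*) [CommRing R] [CommRing A] [CommRing B]
    [Algebra R A] [Algebra R B] [Algebra A B] [IsScalarTower R A B]
    (hΩ : Function.Bijective (KaehlerDifferential.mapBaseChange R A B))
    (bA : A → A → A)
    (haddA₁ : ∀ f g h : A, bA (f + g) h = bA f h + bA g h)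
    (hsmulA₁ : ∀ (r : R) (f g : A), bA (r • f) g = r • bA f g)
    (haddA₂ : ∀ f g h : A, bA f (g + h) = bA f g + bA f h)
    (hsmulA₂ : ∀ (r : R) (f g : A), bA f (r • g) = r • bA f g)
    (hleibA₁ : ∀ f g h : A, bA (f * g) h = f * bA g h + g * bA f h)
    (hleibA₂ : ∀ f g h : A, bA f (g * h) = g * bA f h + h * bA f g)
    (haltA : ∀ f : A, bA f f = 0) :
    (∃! bB : B → B → B,
      ((∀ f g h : B, bB (f + g) h = bB f h + bB g h) ∧
       (∀ (r : R) (f g : B), bB (r • f) g = r • bB f g) ∧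
       (∀ f g h : B, bB f (g + h) = bB f g + bB f h) ∧
       (∀ (r : R) (f g : B), bB f (r • g) = r • bB f g) ∧
       (∀ f g h : B, bB (f * g) h = f * bB g h + g * bB f h) ∧
       (∀ f g h : B, bB f (g * h) = g * bB f h + h * bB f g) ∧
       (∀ f : B, bB f f = 0)) ∧
      (∀ f g : A, bB (algebraMap A B f) (algebraMap A B g)
          = algebraMap A B (bA f g))) ∧
    ((∀ f g h : A, bA f (bA g h) + bA g (bA h f) + bA h (bA f g) = 0) →
      ∀ bB : B → B → B,
        ((∀ f g h : B, bB (f + g) h = bB f h + bB g h) ∧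
         (∀ (r : R) (f g : B), bB (r • f) g = r • bB f g) ∧
         (∀ f g h : B, bB f (g + h) = bB f g + bB f h) ∧
         (∀ (r : R) (f g : B), bB f (r • g) = r • bB f g) ∧
         (∀ f g h : B, bB (f * g) h = f * bB g h + g * bB f h) ∧
         (∀ f g h : B, bB f (g * h) = g * bB f h + h * bB f g) ∧
         (∀ f : B, bB f f = 0)) →
        (∀ f g : A, bB (algebraMap A B f) (algebraMap A B g)
            = algebraMap A B (bA f g)) →
        ∀ f g h : B, bB f (bB g h) + bB g (bB h f) + bB h (bB f g) = 0) := by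
  constructor
  · refine ⟨fun f g => G hΩ bA haddA₁ hsmulA₁ haddA₂ hsmulA₂ hleibA₁ hleibA₂ g f,
      ⟨⟨?_, ?_, ?_, ?_, ?_, ?_, ?_⟩, ?_⟩, ?_⟩
    · intro f g h; exact map_add _ f g
    · intro r f g; exact Derivation.map_smul _ r f
    · intro f g h
      dsimp only
      rw [G_add hΩ bA haddA₁ hsmulA₁ haddA₂ hsmulA₂ hleibA₁ hleibA₂, Derivation.add_apply]
    · intro r f g
      dsimp only
      rw [G_smul hΩ bA haddA₁ hsmulA₁ haddA₂ hsmulA₂ hleibA₁ hleibA₂, Derivation.smul_apply]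
    · intro f g h
      dsimp only
      rw [Derivation.leibniz, smul_eq_mul, smul_eq_mul]
    · intro f g h
      dsimp only
      rw [G_mul hΩ bA haddA₁ hsmulA₁ haddA₂ hsmulA₂ hleibA₁ hleibA₂, Derivation.add_apply,
        Derivation.smul_apply, Derivation.smul_apply, smul_eq_mul, smul_eq_mul]
    · intro f
      dsimp only
      exact G_diag hΩ bA haddA₁ hsmulA₁ haddA₂ hsmulA₂ hleibA₁ hleibA₂ haltA f
    · intro f g
      dsimp only
      exact G_algebraMap₂ hΩ bA haddA₁ hsmulA₁ haddA₂ hsmulA₂ hleibA₁ hleibA₂ f g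
    · rintro y ⟨⟨hy1, hy2, hy3, hy4, hy5, hy6, hy7⟩, hyr⟩
      have step1 : ∀ (a : A) (w : B), y (algebraMap A B a) w =
          G hΩ bA haddA₁ hsmulA₁ haddA₂ hsmulA₂ hleibA₁ hleibA₂ w (algebraMap A B a) := by
        intro a w
        have heq := derEq hΩ.surjective
          (Derivation.mk' (R := R)
            { toFun := fun u => y (algebraMap A B a) u
              map_add' := fun u v => hy3 _ u v
              map_smul' := fun r u => by
                rw [RingHom.id_apply]; exact hy4 r _ u }
            (fun u v => by
              simp only [LinearMap.coe_mk, AddHom.coe_mk]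
              rw [hy6 _ u v, smul_eq_mul, smul_eq_mul]))
          (derMix hΩ bA haddA₁ hsmulA₁ haddA₂ hsmulA₂ hleibA₁ hleibA₂ (algebraMap A B a))
          (fun a' => by
            show y _ _ = _
            rw [hyr a a', derMix_apply,
              G_algebraMap₂ hΩ bA haddA₁ hsmulA₁ haddA₂ hsmulA₂ hleibA₁ hleibA₂])
        simpa using Derivation.congr_fun heq w
      funext f g
      have heq2 := derEq hΩ.surjective
        (Derivation.mk' (R := R)
          { toFun := fun u => y u g
            map_add' := fun u v => hy1 u v g
            map_smul' := fun r u => by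
              rw [RingHom.id_apply]; exact hy2 r u g }
          (fun u v => by
            simp only [LinearMap.coe_mk, AddHom.coe_mk]
            rw [hy5 u v g, smul_eq_mul, smul_eq_mul]))
        (G hΩ bA haddA₁ hsmulA₁ haddA₂ hsmulA₂ hleibA₁ hleibA₂ g)
        (fun a => by show y _ _ = _; rw [step1 a g])
      simpa using Derivation.congr_fun heq2 f
  · rintro hJA bB ⟨h1, h2, h3, h4, h5, h6, h7⟩ hres
    have hanti : ∀ u v : B, bB u v + bB v u = 0 := by
      intro u v
      have h0 := h7 (u + v)
      rw [h1, h3, h3, h7 u, h7 v] at h0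
      linear_combination h0
    set J : B → B → B → B :=
      fun x y z => bB x (bB y z) + bB y (bB z x) + bB z (bB x y) with hJdef
    have cyc : ∀ x y z, J x y z = J y z x := by
      intro x y z; simp only [hJdef]; ring
    have Jder : ∀ x y : B, ∃ D : Derivation R B B, ∀ w, D w = J w x y := by
      intro x y
      refine ⟨Derivation.mk' (R := R)
        { toFun := fun w => J w x y
          map_add' := fun u v => by
            simp only [hJdef, h1, h3]; ring
          map_smul' := fun r u => by
            simp only [hJdef, h2, h4, RingHom.id_apply, smul_add] }
        (fun u v => by
          simp only [LinearMap.coe_mk, AddHom.coe_mk, hJdef, h5, h6, h3, smul_eq_mul]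
          linear_combination (bB y v) * hanti x u + (bB y u) * hanti x v), fun w => rfl⟩
    have zero2 : ∀ (a' a'' : A) (f : B),
        J f (algebraMap A B a') (algebraMap A B a'') = 0 := by
      intro a' a'' f
      obtain ⟨D, hD⟩ := Jder (algebraMap A B a') (algebraMap A B a'')
      have hz : D = 0 := by
        refine derEq hΩ.surjective D 0 fun a => ?_
        rw [hD, Derivation.zero_apply]
        simp only [hJdef]
        rw [hres a' a'', hres a a', hres a'' a, hres a (bA a' a''), hres a' (bA a'' a),
          hres a'' (bA a a'), ← map_add, ← map_add, hJA a a' a'', map_zero]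
      rw [← hD f, hz, Derivation.zero_apply]
    have zero3 : ∀ (a'' : A) (f g : B), J f g (algebraMap A B a'') = 0 := by
      intro a'' f g
      obtain ⟨D, hD⟩ := Jder (algebraMap A B a'') f
      have hz : D = 0 := by
        refine derEq hΩ.surjective D 0 fun a => ?_
        rw [hD, Derivation.zero_apply, cyc, cyc]
        exact zero2 a a'' f
      have := hD g
      rw [hz, Derivation.zero_apply] at this
      rw [cyc]
      exact this.symm
    intro f g h
    obtain ⟨D, hD⟩ := Jder f g
    have hz : D = 0 := by
      refine derEq hΩ.surjective D 0 fun a => ?_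
      rw [hD, Derivation.zero_apply, cyc]
      exact zero3 a f g
    have e := hD h
    rw [hz, Derivation.zero_apply] at e
    show J f g h = 0
    rw [cyc, cyc]
    exact e.symm
end
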